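/- Let V = ℝ^n, let W ⊆ ⋀^r V be a subspace, and let c be an integer with 0 ≤ c ≤ n - r. Then dim(W ∧ ⋀^c V) / C(n, r+c) ≥ dim(W) / C(n, r), where W ∧ ⋀^c V denotes the linear span of all wedge products w ∧ z with w ∈ W and z ∈ ⋀^c V. -/

import Mathlib

noncomputable section
namespace LocalLYM
open ExteriorAlgebra
variable {n : ℕ}
abbrev EA (n : ℕ) := ExteriorAlgebra ℝ (Fin n → ℝ)
def ev (i : Fin n) : Fin n → ℝ := Pi.single i 1
def Dc (i : Fin n) : EA n →ₗ[ℝ] EA n := CliffordAlgebra.contractLeft (LinearMap.proj i)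
lemma Dc_ι_mul (i j : Fin n) (x : EA n) :
    Dc i (ι ℝ (ev j) * x) = (ev j i) • x - ι ℝ (ev j) * Dc i x := by
  simpa [Dc] using CliffordAlgebra.contractLeft_ι_mul (LinearMap.proj i) (ev j) x
lemma ev_apply_self (i : Fin n) : ev i i = 1 := Pi.single_eq_same i 1
lemma ev_apply_ne {i j : Fin n} (h : j ≠ i) : ev j i = 0 :=
  Pi.single_eq_of_ne (fun hh => h hh.symm) 1
lemma Dc_one (i : Fin n) : Dc i (1 : EA n) = 0 := CliffordAlgebra.contractLeft_one _ _
def bl (l : List (Fin n)) : EA n := (l.map fun i => ι ℝ (ev i)).prod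
@[simp] lemma bl_nil : bl ([] : List (Fin n)) = 1 := rfl
@[simp] lemma bl_cons (i : Fin n) (l : List (Fin n)) :
    bl (i :: l) = ι ℝ (ev i) * bl l := by simp [bl]
lemma bl_append (l m : List (Fin n)) : bl (l ++ m) = bl l * bl m := by simp [bl]
lemma Dc_bl_of_not_mem {i : Fin n} : ∀ {l : List (Fin n)}, i ∉ l → Dc i (bl l) = 0
  | [], _ => by simp [Dc_one]
  | j :: l, h => by
    have hj : j ≠ i := fun hji => h (by simp [hji])
    have hl : i ∉ l := fun hl => h (by simp [hl])
    rw [bl_cons, Dc_ι_mul, ev_apply_ne hj, Dc_bl_of_not_mem hl]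
    simp

/-- iterated contraction -/
def Cl : List (Fin n) → (EA n →ₗ[ℝ] EA n)
  | [] => LinearMap.id
  | a :: l => (Cl l) ∘ₗ Dc a

@[simp] lemma Cl_nil (x : EA n) : Cl [] x = x := rfl
@[simp] lemma Cl_cons (a : Fin n) (l : List (Fin n)) (x : EA n) :
    Cl (a :: l) x = Cl l (Dc a x) := rfl

/-- coefficient functional -/
def lam (l : List (Fin n)) : EA n →ₗ[ℝ] ℝ :=
  (algebraMapInv : EA n →ₐ[ℝ] ℝ).toLinearMap ∘ₗ Cl l

lemma lam_apply (l : List (Fin n)) (x : EA n) : lam l x = algebraMapInv (Cl l x) := rfl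

lemma Cl_ι_mul {i : Fin n} : ∀ {l : List (Fin n)}, i ∉ l → ∀ x : EA n,
    Cl l (ι ℝ (ev i) * x) = ((-1 : ℝ)) ^ l.length • (ι ℝ (ev i) * Cl l x)
  | [], _, x => by simp
  | a :: l, h, x => by
    have ha : i ≠ a := fun hia => h (by simp [hia])
    have hl : i ∉ l := fun hl => h (by simp [hl])
    rw [Cl_cons, Dc_ι_mul, ev_apply_ne ha]
    rw [zero_smul, zero_sub, map_neg, Cl_ι_mul hl (Dc a x)]
    simp [pow_succ]

lemma algebraMapInv_ι_mul (m : Fin n → ℝ) (x : EA n) :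
    algebraMapInv (ι ℝ m * x) = 0 := by
  rw [map_mul]
  have h : algebraMapInv (ι ℝ m) = (0 : ℝ) := by
    simp [algebraMapInv]
  rw [h, zero_mul]

lemma lam_ι_mul_of_not_mem {i : Fin n} {l : List (Fin n)} (h : i ∉ l) (x : EA n) :
    lam l (ι ℝ (ev i) * x) = 0 := by
  rw [lam_apply, Cl_ι_mul h, map_smul, algebraMapInv_ι_mul, smul_zero]


lemma lam_bl_sorted : ∀ (l m : List (Fin n)), l.Pairwise (· < ·) → m.Pairwise (· < ·) →
    lam l (bl m) = if l = m then 1 else 0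
  | [], [], _, _ => by simp [lam_apply]
  | [], b :: m', _, _ => by
    rw [bl_cons, lam_apply, Cl_nil, algebraMapInv_ι_mul]
    simp
  | a :: l', [], _, _ => by
    rw [lam_apply, Cl_cons, bl_nil, Dc_one, map_zero, map_zero]
    simp
  | a :: l', b :: m', hl, hm => by
    have hl' : l'.Pairwise (· < ·) := hl.of_cons
    have hm' : m'.Pairwise (· < ·) := hm.of_cons
    by_cases hab : a = b
    · subst hab
      have ham' : a ∉ m' := fun h => lt_irrefl a (List.rel_of_pairwise_cons hm h)
      rw [bl_cons, lam_apply, Cl_cons, Dc_ι_mul, ev_apply_self, one_smul,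
        Dc_bl_of_not_mem ham', mul_zero, sub_zero, ← lam_apply, lam_bl_sorted l' m' hl' hm']
      simp
    · have hne : a :: l' ≠ b :: m' := fun h => hab (List.head_eq_of_cons_eq h)
      rw [if_neg hne]
      by_cases ham : a ∈ b :: m'
      · have hba : b < a := by
          rcases List.mem_cons.mp ham with h | h
          · exact absurd h hab
          · exact List.rel_of_pairwise_cons hm h
        have hbl' : b ∉ l' := fun h => absurd (List.rel_of_pairwise_cons hl h) (by
          exact not_lt.mpr hba.le)
        rw [lam_apply, Cl_cons, bl_cons, Dc_ι_mul, ev_apply_ne (fun h => hab h.symm),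
          zero_smul, zero_sub, map_neg, map_neg, ← lam_apply,
          lam_ι_mul_of_not_mem hbl', neg_zero]
      · rw [lam_apply, Cl_cons, Dc_bl_of_not_mem ham, map_zero, map_zero]


lemma ι_mul_ι_neg (x y : Fin n → ℝ) :
    ι ℝ x * ι ℝ y = -(ι ℝ y * ι ℝ x) :=
  eq_neg_of_add_eq_zero_left (ExteriorAlgebra.ι_add_mul_swap x y)

lemma ι_mul_bl_of_mem {i : Fin n} : ∀ {l : List (Fin n)}, i ∈ l →
    ι ℝ (ev i) * bl l = 0
  | j :: l', h => by
    rcases List.mem_cons.mp h with h | h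
    · subst h
      rw [bl_cons, ← mul_assoc, ExteriorAlgebra.ι_sq_zero, zero_mul]
    · rw [bl_cons, ← mul_assoc, ι_mul_ι_neg, neg_mul, mul_assoc, ι_mul_bl_of_mem h, mul_zero, neg_zero]

lemma orderedInsert_of_forall_le {i : Fin n} : ∀ {l : List (Fin n)}, (∀ x ∈ l, i ≤ x) →
    l.orderedInsert (· ≤ ·) i = i :: l
  | [], _ => rfl
  | j :: l', h => List.orderedInsert_cons_of_le _ _ (h j (by simp))

lemma bl_append_single {i : Fin n} : ∀ {l : List (Fin n)}, l.Pairwise (· < ·) →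
    bl (l ++ [i]) = if i ∈ l then 0 else
      ((-1 : ℝ)) ^ (l.countP (fun j => decide (i < j))) • bl (l.orderedInsert (· ≤ ·) i)
  | [], _ => by simp
  | j :: l', hl => by
    have hl' : l'.Pairwise (· < ·) := hl.of_cons
    have hstep : bl ((j :: l') ++ [i]) = ι ℝ (ev j) * bl (l' ++ [i]) := by
      rw [List.cons_append, bl_cons]
    by_cases him : i ∈ j :: l'
    · rw [if_pos him]
      rcases List.mem_cons.mp him with h | h
      · -- i = j
        subst h
        have hil' : i ∉ l' := fun h => lt_irrefl i (List.rel_of_pairwise_cons hl h)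
        rw [hstep, bl_append_single hl', if_neg hil', mul_smul_comm,
          ι_mul_bl_of_mem ((List.perm_orderedInsert _ i l').mem_iff.mpr List.mem_cons_self), smul_zero]
      · rw [hstep, bl_append_single hl', if_pos h, mul_zero]
    · rw [if_neg him]
      have hij : i ≠ j := fun h => him (by simp [h])
      have hil' : i ∉ l' := fun h => him (by simp [h])
      rw [hstep, bl_append_single hl', if_neg hil']
      rcases lt_or_gt_of_ne hij with hlt | hgt
      · -- i < j, so i is below everything in l
        have hall : ∀ x ∈ l', i ≤ x := fun x hx =>
          le_of_lt (lt_trans hlt (List.rel_of_pairwise_cons hl hx))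
        have hcount' : l'.countP (fun j => decide (i < j)) = l'.length := by
          apply List.countP_eq_length.mpr
          intro x hx
          exact decide_eq_true (lt_of_lt_of_le hlt (List.rel_of_pairwise_cons hl hx).le)
        have hcount : (j :: l').countP (fun k => decide (i < k)) = l'.length + 1 := by
          simp [List.countP_cons, hcount', hlt]
        rw [orderedInsert_of_forall_le hall,
          List.orderedInsert_cons_of_le _ _ hlt.le, hcount, hcount', mul_smul_comm]
        rw [bl_cons, bl_cons, ← mul_assoc, ι_mul_ι_neg (ev j) (ev i), neg_mul, mul_assoc,
          pow_succ, bl_cons]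
        module
      · -- j < i
        have hins : (j :: l').orderedInsert (· ≤ ·) i = j :: l'.orderedInsert (· ≤ ·) i := by
          simp [List.orderedInsert, not_le.mpr hgt]
        have hcount : (j :: l').countP (fun k => decide (i < k)) =
            l'.countP (fun k => decide (i < k)) := by
          rw [List.countP_cons, decide_eq_false (not_lt.mpr hgt.le), if_neg]
          · simp
          · simp
        rw [hins, hcount, mul_smul_comm, bl_cons]


/-- the sign picked up when multiplying `bS S` by `ι (ev i)` on the right -/
def sgn (i : Fin n) (S : Finset (Fin n)) : ℝ :=
  (-1) ^ ((S.filter (fun j => i < j)).card)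

lemma sgn_mul_self (i : Fin n) (S : Finset (Fin n)) : sgn i S * sgn i S = 1 := by
  rw [sgn, ← pow_add]
  exact Even.neg_one_pow ⟨_, rfl⟩

/-- monomial attached to a finset -/
def bS (S : Finset (Fin n)) : EA n := bl (S.sort (· ≤ ·))

/-- coefficient functional attached to a finset -/
def lamS (S : Finset (Fin n)) : EA n →ₗ[ℝ] ℝ := lam (S.sort (· ≤ ·))

@[simp] lemma bS_empty : bS (∅ : Finset (Fin n)) = 1 := by simp [bS]

lemma lamS_bS (S T : Finset (Fin n)) : lamS S (bS T) = if S = T then 1 else 0 := by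
  rw [lamS, bS, lam_bl_sorted _ _ ((Finset.sortedLT_sort S).pairwise) (Finset.sortedLT_sort T).pairwise]
  congr 1
  simp only [eq_iff_iff]
  constructor
  · intro h
    rw [← Finset.sort_toFinset S (· ≤ ·), ← Finset.sort_toFinset T (· ≤ ·), h]
  · intro h; rw [h]

lemma sort_insert_eq {i : Fin n} {S : Finset (Fin n)} (h : i ∉ S) :
    (insert i S).sort (· ≤ ·) = (S.sort (· ≤ ·)).orderedInsert (· ≤ ·) i := by
  apply List.Perm.eq_of_pairwise' (Finset.pairwise_sort _ _)
    (List.Pairwise.orderedInsert _ _ (Finset.pairwise_sort _ _))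
  have h1 : (↑((insert i S).sort (· ≤ ·)) : Multiset (Fin n)) = i ::ₘ (↑(S.sort (· ≤ ·)) : Multiset (Fin n)) := by
    rw [Finset.sort_eq, Finset.sort_eq, Finset.insert_val, Multiset.ndinsert_of_notMem h]
  have h2 : List.Perm ((insert i S).sort (· ≤ ·)) (i :: S.sort (· ≤ ·)) := by
    exact Multiset.coe_eq_coe.mp h1
  exact h2.trans (List.perm_orderedInsert _ i _).symm

lemma countP_sort_eq (i : Fin n) (S : Finset (Fin n)) :
    (S.sort (· ≤ ·)).countP (fun j => decide (i < j)) = (S.filter (fun j => i < j)).card := by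
  classical
  have h1 : (S.sort (· ≤ ·)).countP (fun j => decide (i < j)) =
      Multiset.countP (fun j => i < j) (↑(S.sort (· ≤ ·)) : Multiset (Fin n)) :=
    (Multiset.coe_countP _ _).symm
  rw [h1, Finset.sort_eq, Multiset.countP_eq_card_filter]
  rfl

lemma bS_mul_ι_of_not_mem {i : Fin n} {S : Finset (Fin n)} (h : i ∉ S) :
    bS S * ι ℝ (ev i) = sgn i S • bS (insert i S) := by
  have hi : i ∉ S.sort (· ≤ ·) := fun hh => h (Finset.mem_sort _ |>.mp hh)
  have : bS S * ι ℝ (ev i) = bl (S.sort (· ≤ ·) ++ [i]) := by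
    rw [bl_append, bS, bl_cons, bl_nil, mul_one]
  rw [this, bl_append_single ((Finset.sortedLT_sort S).pairwise), if_neg hi, bS, sort_insert_eq h,
    sgn, countP_sort_eq]

lemma bS_mul_ι_of_mem {i : Fin n} {S : Finset (Fin n)} (h : i ∈ S) :
    bS S * ι ℝ (ev i) = 0 := by
  have hi : i ∈ S.sort (· ≤ ·) := Finset.mem_sort _ |>.mpr h
  have : bS S * ι ℝ (ev i) = bl (S.sort (· ≤ ·) ++ [i]) := by
    rw [bl_append, bS, bl_cons, bl_nil, mul_one]
  rw [this, bl_append_single ((Finset.sortedLT_sort S).pairwise), if_pos hi]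


lemma ev_sum (v : Fin n → ℝ) : ∑ i, v i • ev i = v := by
  funext j
  rw [Finset.sum_apply]
  simp [ev, Pi.single_apply]

/-- the span of the degree-`r` monomials -/
def monSpan (n r : ℕ) : Submodule ℝ (EA n) :=
  Submodule.span ℝ (bS '' {S : Finset (Fin n) | S.card = r})

lemma bS_mem_monSpan {S : Finset (Fin n)} {r : ℕ} (h : S.card = r) :
    bS S ∈ monSpan n r :=
  Submodule.subset_span ⟨S, h, rfl⟩

lemma mul_ι_mem_monSpan {r : ℕ} {x : EA n} (hx : x ∈ monSpan n r) (v : Fin n → ℝ) :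
    x * ι ℝ v ∈ monSpan n (r + 1) := by
  induction hx using Submodule.span_induction with
  | mem y hy =>
    obtain ⟨S, hS, rfl⟩ := hy
    have hv : ι ℝ v = ∑ i, v i • ι ℝ (ev i) := by
      have := congrArg (ι ℝ (M := Fin n → ℝ)) (ev_sum v).symm
      rw [this, map_sum]
      simp
    rw [hv, Finset.mul_sum]
    apply Submodule.sum_mem
    intro i _
    rw [mul_smul_comm]
    apply Submodule.smul_mem
    by_cases hiS : i ∈ S
    · rw [bS_mul_ι_of_mem hiS]; exact Submodule.zero_mem _
    · rw [bS_mul_ι_of_not_mem hiS]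
      apply Submodule.smul_mem
      exact bS_mem_monSpan (by rw [Finset.card_insert_of_notMem hiS, hS])
  | zero => rw [zero_mul]; exact Submodule.zero_mem _
  | add y z _ _ hy hz => rw [add_mul]; exact Submodule.add_mem _ hy hz
  | smul c y _ hy => rw [smul_mul_assoc]; exact Submodule.smul_mem _ c hy

lemma exteriorPower_le_monSpan : ∀ r : ℕ, ⋀[ℝ]^r (Fin n → ℝ) ≤ monSpan n r := by
  intro r
  induction r with
  | zero =>
    rw [exteriorPower, pow_zero, Submodule.one_eq_span]
    apply Submodule.span_le.mpr
    rintro x rfl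
    simpa using bS_mem_monSpan (S := (∅ : Finset (Fin n))) rfl
  | succ r ih =>
    rw [exteriorPower, pow_succ]
    apply Submodule.mul_le.mpr
    intro m hm z hz
    obtain ⟨v, rfl⟩ := hz
    exact mul_ι_mem_monSpan (ih hm) v


open Finset
open scoped RealInnerProductSpace

abbrev X (n : ℕ) := EuclideanSpace ℝ (Finset (Fin n))

/-- raising operator -/
def U (i : Fin n) : X n →ₗ[ℝ] X n where
  toFun x := WithLp.toLp 2 (fun T => if i ∈ T then sgn i (T.erase i) * x (T.erase i) else 0)
  map_add' x y := by
    ext T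
    by_cases h : i ∈ T <;> simp [h, PiLp.add_apply, mul_add]
  map_smul' c x := by
    ext T
    by_cases h : i ∈ T <;> simp [h, PiLp.smul_apply, smul_eq_mul] <;> ring

/-- lowering operator -/
def Dop (i : Fin n) : X n →ₗ[ℝ] X n where
  toFun y := WithLp.toLp 2 (fun S => if i ∈ S then 0 else sgn i S * y (insert i S))
  map_add' x y := by
    ext T
    by_cases h : i ∈ T <;> simp [h, PiLp.add_apply, mul_add]
  map_smul' c x := by
    ext T
    by_cases h : i ∈ T <;> simp [h, PiLp.smul_apply, smul_eq_mul] <;> ring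

lemma U_apply (i : Fin n) (x : X n) (T : Finset (Fin n)) :
    U i x T = if i ∈ T then sgn i (T.erase i) * x (T.erase i) else 0 := rfl

lemma Dop_apply (i : Fin n) (y : X n) (S : Finset (Fin n)) :
    Dop i y S = if i ∈ S then 0 else sgn i S * y (insert i S) := rfl

lemma Dop_U_apply (i : Fin n) (x : X n) (S : Finset (Fin n)) :
    Dop i (U i x) S = if i ∈ S then 0 else x S := by
  rw [Dop_apply]
  by_cases h : i ∈ S
  · simp [h]
  · rw [if_neg h, if_neg h, U_apply, if_pos (mem_insert_self i S),
      Finset.erase_insert h, ← mul_assoc, sgn_mul_self, one_mul]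

lemma U_Dop_apply (i : Fin n) (y : X n) (T : Finset (Fin n)) :
    U i (Dop i y) T = if i ∈ T then y T else 0 := by
  rw [U_apply]
  by_cases h : i ∈ T
  · rw [if_pos h, if_pos h, Dop_apply, if_neg (notMem_erase i T),
      Finset.insert_erase h, ← mul_assoc, sgn_mul_self, one_mul]
  · rw [if_neg h, if_neg h]

/-- reindexing between sets containing `i` and sets not containing `i` -/
lemma sum_insert_reindex (i : Fin n) (g : Finset (Fin n) → ℝ) :
    ∑ T ∈ univ.filter (fun T => i ∈ T), g T
      = ∑ S ∈ univ.filter (fun S => i ∉ S), g (insert i S) := by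
  apply Finset.sum_nbij' (fun T => T.erase i) (fun S => insert i S)
  · intro T hT
    simp only [mem_filter, mem_univ, true_and] at hT ⊢
    exact notMem_erase i T
  · intro S hS
    simp only [mem_filter, mem_univ, true_and] at hS ⊢
    exact mem_insert_self i S
  · intro T hT
    simp only [mem_filter, mem_univ, true_and] at hT
    exact Finset.insert_erase hT
  · intro S hS
    simp only [mem_filter, mem_univ, true_and] at hS
    exact Finset.erase_insert hS
  · intro T hT
    simp only [mem_filter, mem_univ, true_and] at hT
    rw [Finset.insert_erase hT]

lemma inner_eq_sum (x y : X n) : ⟪x, y⟫ = ∑ S, x S * y S := by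
  rw [PiLp.inner_apply]
  simp [RCLike.inner_apply, mul_comm]

lemma adjoint_U_Dop (i : Fin n) (x y : X n) : ⟪U i x, y⟫ = ⟪x, Dop i y⟫ := by
  rw [inner_eq_sum, inner_eq_sum]
  rw [← Finset.sum_filter_add_sum_filter_not univ (fun T => i ∈ T) (fun T => U i x T * y T)]
  rw [← Finset.sum_filter_add_sum_filter_not univ (fun S => i ∈ S) (fun S => x S * Dop i y S)]
  have h1 : ∑ T ∈ univ.filter (fun T => i ∉ T), U i x T * y T = 0 := by
    apply Finset.sum_eq_zero
    intro T hT
    simp only [mem_filter, mem_univ, true_and] at hT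
    rw [U_apply, if_neg hT, zero_mul]
  have h2 : ∑ S ∈ univ.filter (fun S => i ∈ S), x S * Dop i y S = 0 := by
    apply Finset.sum_eq_zero
    intro S hS
    simp only [mem_filter, mem_univ, true_and] at hS
    rw [Dop_apply, if_pos hS, mul_zero]
  rw [h1, h2, add_zero, zero_add, sum_insert_reindex i]
  apply Finset.sum_congr rfl
  intro S hS
  simp only [mem_filter, mem_univ, true_and] at hS
  rw [U_apply, if_pos (mem_insert_self i S), Finset.erase_insert hS,
    Dop_apply, if_neg hS]
  ring


lemma X_sum_apply {ι : Type*} (s : Finset ι) (f : ι → X n) (T : Finset (Fin n)) :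
    (∑ i ∈ s, f i) T = ∑ i ∈ s, f i T := by
  show WithLp.ofLp (∑ i ∈ s, f i) T = _
  rw [WithLp.ofLp_sum, Finset.sum_apply]

/-- the subspace of vectors supported on `r`-sets -/
def grade (n r : ℕ) : Submodule ℝ (X n) where
  carrier := {x | ∀ S : Finset (Fin n), S.card ≠ r → x S = 0}
  add_mem' hx hy S hS := by
    rw [PiLp.add_apply, hx S hS, hy S hS, add_zero]
  zero_mem' S hS := rfl
  smul_mem' c x hx S hS := by
    rw [PiLp.smul_apply, hx S hS, smul_zero]

/-- coordinate projection onto `grade n r` -/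
def rho (n r : ℕ) : X n →ₗ[ℝ] X n where
  toFun x := WithLp.toLp 2 (fun S => if S.card = r then x S else 0)
  map_add' x y := by
    ext S
    by_cases h : S.card = r <;> simp [h, PiLp.add_apply]
  map_smul' c x := by
    ext S
    by_cases h : S.card = r <;> simp [h, PiLp.smul_apply]

lemma rho_apply (r : ℕ) (x : X n) (S : Finset (Fin n)) :
    rho n r x S = if S.card = r then x S else 0 := rfl

lemma rho_eq_self {r : ℕ} {x : X n} (hx : x ∈ grade n r) : rho n r x = x := by
  ext S
  rw [rho_apply]
  by_cases h : S.card = r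
  · rw [if_pos h]
  · rw [if_neg h, hx S h]

lemma inner_rho_left (r : ℕ) (x y : X n) : ⟪rho n r x, y⟫ = ⟪x, rho n r y⟫ := by
  rw [inner_eq_sum, inner_eq_sum]
  apply Finset.sum_congr rfl
  intro S _
  rw [rho_apply, rho_apply]
  by_cases h : S.card = r <;> simp [h]

lemma rho_Dop (r : ℕ) (i : Fin n) (y : X n) :
    rho n r (Dop i y) = Dop i (rho n (r + 1) y) := by
  ext S
  rw [rho_apply, Dop_apply, Dop_apply]
  by_cases hi : i ∈ S
  · simp [hi]
  · rw [if_neg hi, if_neg hi, rho_apply]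
    by_cases h : S.card = r
    · rw [if_pos h, if_pos (by rw [Finset.card_insert_of_notMem hi, h])]
    · have h2 : ¬ (insert i S).card = r + 1 := by
        rw [Finset.card_insert_of_notMem hi]
        exact fun hh => h (Nat.succ_injective hh)
      rw [if_neg h, if_neg h2, mul_zero]

lemma inner_rho_le (r : ℕ) (y : X n) : ⟪rho n r y, rho n r y⟫ ≤ ⟪y, y⟫ := by
  rw [inner_eq_sum, inner_eq_sum]
  apply Finset.sum_le_sum
  intro S _
  rw [rho_apply]
  by_cases h : S.card = r
  · rw [if_pos h]
  · rw [if_neg h, mul_zero]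
    exact mul_self_nonneg _

lemma sum_U_Dop_of_grade {r : ℕ} {x : X n} (hx : x ∈ grade n (r + 1)) :
    ∑ i, U i (Dop i x) = ((r : ℝ) + 1) • x := by
  ext T
  rw [X_sum_apply, PiLp.smul_apply, smul_eq_mul]
  simp_rw [U_Dop_apply]
  rw [Finset.sum_ite_mem, Finset.univ_inter, Finset.sum_const, nsmul_eq_mul]
  by_cases h : T.card = r + 1
  · rw [h]; push_cast; ring
  · rw [hx T h, mul_zero, mul_zero]

lemma sum_Dop_U_of_grade {r : ℕ} {x : X n} (hx : x ∈ grade n r) :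
    ∑ i, Dop i (U i x) = ((n : ℝ) - r) • x := by
  ext S
  rw [X_sum_apply, PiLp.smul_apply, smul_eq_mul]
  simp_rw [Dop_U_apply]
  rw [Finset.sum_ite, Finset.sum_const, Finset.sum_const, smul_zero, zero_add, nsmul_eq_mul]
  by_cases h : S.card = r
  · have hr : r ≤ n := h ▸ (Finset.card_le_card (Finset.subset_univ S)).trans_eq
      (Finset.card_fin n)
    have : (Finset.univ.filter (fun i => i ∉ S)).card = n - r := by
      rw [Finset.filter_not, Finset.filter_mem_eq_inter, Finset.univ_inter,
        Finset.card_sdiff_of_subset (Finset.subset_univ S), Finset.card_fin, h]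
    rw [this, Nat.cast_sub hr]
  · rw [hx S h, mul_zero, mul_zero]



open Module

lemma trace_le_rank_of_bound {V : Type*} [NormedAddCommGroup V] [InnerProductSpace ℝ V]
    [FiniteDimensional ℝ V] (A : V →ₗ[ℝ] V)
    (hsym : ∀ x y : V, ⟪A x, y⟫ = ⟪x, A y⟫) (α : ℝ)
    (hα : 0 ≤ α)
    (h0 : ∀ x : V, 0 ≤ ⟪A x, x⟫) (h1 : ∀ x : V, ⟪A x, x⟫ ≤ α * ⟪x, x⟫) :
    LinearMap.trace ℝ V A ≤ α * (finrank ℝ (LinearMap.range A)) := by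
  classical
  have hT : A.IsSymmetric := fun x y => hsym x y
  set N := finrank ℝ V with hN
  have hNr : finrank ℝ V = N := rfl
  let b := hT.eigenvectorBasis hNr
  let μ : Fin N → ℝ := hT.eigenvalues hNr
  have hA : ∀ i, A (b i) = μ i • b i := fun i =>
    (hT.hasEigenvector_eigenvectorBasis hNr i).apply_eq_smul
  have hnorm : ∀ i, ⟪b i, b i⟫ = 1 := fun i => by
    rw [real_inner_self_eq_norm_sq, b.orthonormal.1 i, one_pow]
  have hmu : ∀ i, ⟪A (b i), b i⟫ = μ i := fun i => by
    rw [hA i, real_inner_smul_left, hnorm i, mul_one]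
  have hmu0 : ∀ i, 0 ≤ μ i := fun i => by rw [← hmu i]; exact h0 (b i)
  have hmua : ∀ i, μ i ≤ α := fun i => by
    have := h1 (b i)
    rwa [hmu i, hnorm i, mul_one] at this
  -- trace is the sum of eigenvalues
  have htrace : LinearMap.trace ℝ V A = ∑ i, μ i := by
    rw [LinearMap.trace_eq_matrix_trace ℝ b.toBasis A, Matrix.trace]
    apply Finset.sum_congr rfl
    intro i _
    rw [Matrix.diag_apply, LinearMap.toMatrix_apply, OrthonormalBasis.coe_toBasis, hA i,
      OrthonormalBasis.coe_toBasis_repr_apply, map_smul, PiLp.smul_apply, b.repr_self]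
    simp [EuclideanSpace.single_apply]
  -- nonzero eigenvalues
  set s : Finset (Fin N) := Finset.univ.filter (fun i => μ i ≠ 0) with hs
  have hcard : (s.card : ℝ) ≤ (finrank ℝ (LinearMap.range A) : ℝ) := by
    have hli : LinearIndependent ℝ (fun i : s => b i) :=
      b.orthonormal.linearIndependent.comp Subtype.val Subtype.val_injective
    have hspan : Submodule.span ℝ (Set.range (fun i : s => b i)) ≤ LinearMap.range A := by
      rw [Submodule.span_le]
      rintro x ⟨i, rfl⟩
      show b (i : Fin N) ∈ LinearMap.range A
      have hi : μ i.1 ≠ 0 := (Finset.mem_filter.mp i.2).2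
      have : b i.1 = (μ i.1)⁻¹ • A (b i.1) := by
        rw [hA, smul_smul, inv_mul_cancel₀ hi, one_smul]
      rw [this]
      exact Submodule.smul_mem _ _ (LinearMap.mem_range_self A (b i.1))
    have := Submodule.finrank_mono hspan
    rw [finrank_span_eq_card hli] at this
    exact_mod_cast (by simpa using this : s.card ≤ finrank ℝ (LinearMap.range A))
  calc LinearMap.trace ℝ V A = ∑ i, μ i := htrace
    _ = ∑ i ∈ s, μ i := by
        rw [hs]
        rw [Finset.sum_filter_ne_zero]
    _ ≤ ∑ _i ∈ s, α := Finset.sum_le_sum (fun i _ => hmua i)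
    _ = s.card * α := by rw [Finset.sum_const, nsmul_eq_mul]
    _ ≤ (finrank ℝ (LinearMap.range A)) * α := by
        exact mul_le_mul_of_nonneg_right hcard hα
    _ = α * (finrank ℝ (LinearMap.range A)) := mul_comm _ _


/-- orthogonal projection onto K, as an endomorphism -/
def piK (K : Submodule ℝ (X n)) : X n →ₗ[ℝ] X n :=
  K.subtype ∘ₗ (K.orthogonalProjectionOnto).toLinearMap

lemma piK_mem (K : Submodule ℝ (X n)) (u : X n) : piK K u ∈ K := (K.orthogonalProjectionOnto u).2

lemma piK_eq_self {K : Submodule ℝ (X n)} {u : X n} (h : u ∈ K) : piK K u = u := by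
  have := Submodule.orthogonalProjectionOnto_mem_subspace_eq_self (K := K) ⟨u, h⟩
  simpa [piK] using congrArg (Submodule.subtype K) this

lemma inner_piK_left (K : Submodule ℝ (X n)) (u v : X n) : ⟪piK K u, v⟫ = ⟪u, piK K v⟫ :=
  Submodule.inner_starProjection_left_eq_right K u v

lemma inner_piK_self (K : Submodule ℝ (X n)) (u : X n) : ⟪piK K u, u⟫ = ⟪piK K u, piK K u⟫ := by
  conv_lhs => rw [← piK_eq_self (piK_mem K u)]
  exact inner_piK_left K _ u

lemma inner_piK_le (K : Submodule ℝ (X n)) (u : X n) : ⟪piK K u, piK K u⟫ ≤ ⟪u, u⟫ := by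
  have hdecomp : u = (u - piK K u) + piK K u := by abel
  have hzero : ⟪u - piK K u, piK K u⟫ = 0 :=
    Submodule.starProjection_inner_eq_zero u (piK K u) (piK_mem K u)
  have hexp := real_inner_add_add_self (u - piK K u) (piK K u)
  rw [← hdecomp] at hexp
  have h1 : (0:ℝ) ≤ ⟪u - piK K u, u - piK K u⟫ := real_inner_self_nonneg
  rw [hexp, hzero]
  linarith

lemma rho_mem_grade (r : ℕ) (x : X n) : rho n r x ∈ grade n r := by
  intro S hS
  rw [rho_apply, if_neg hS]

lemma piK_rho {K : Submodule ℝ (X n)} {r : ℕ} (hK : K ≤ grade n r) (u : X n) :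
    piK K (rho n r u) = piK K u := by
  have horth : u - rho n r u ∈ Kᗮ := by
    intro w hw
    rw [inner_eq_sum]
    apply Finset.sum_eq_zero
    intro S _
    by_cases h : S.card = r
    · rw [PiLp.sub_apply, rho_apply, if_pos h, sub_self, mul_zero]
    · rw [hK hw S h, zero_mul]
  have : piK K (u - rho n r u) = 0 := by
    have := Submodule.orthogonalProjectionOnto_apply_of_mem_orthogonal horth
    simp [piK, this]
  have h2 := congrArg (piK K) (sub_sub_cancel u (rho n r u)).symm
  rw [map_sub, this, sub_zero] at h2
  exact h2

lemma trace_piK (K : Submodule ℝ (X n)) :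
    LinearMap.trace ℝ (X n) (piK K) = finrank ℝ K := by
  have hproj : LinearMap.IsProj K (piK K) := ⟨piK_mem K, fun x hx => piK_eq_self hx⟩
  exact hproj.trace

lemma core (r : ℕ) (K : Submodule ℝ (X n)) (hK : K ≤ grade n r) :
    ((n : ℝ) - r) * finrank ℝ K ≤ ((r : ℝ) + 1) * finrank ℝ ↥(⨆ i, K.map (U i)) := by
  classical
  set π : X n →ₗ[ℝ] X n := piK K with hπ
  set A : X n →ₗ[ℝ] X n := ∑ i, U i ∘ₗ π ∘ₗ Dop i with hA
  have hAapply : ∀ x, A x = ∑ i, U i (π (Dop i x)) := by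
    intro x; rw [hA, LinearMap.sum_apply]; rfl
  have hinner : ∀ x y : X n, ⟪A x, y⟫ = ∑ i, ⟪π (Dop i x), Dop i y⟫ := by
    intro x y
    rw [hAapply, sum_inner]
    exact Finset.sum_congr rfl fun i _ => adjoint_U_Dop i _ y
  have hsym : ∀ x y : X n, ⟪A x, y⟫ = ⟪x, A y⟫ := by
    intro x y
    rw [hinner x y, real_inner_comm (A y) x, hinner y x]
    apply Finset.sum_congr rfl
    intro i _
    rw [hπ, inner_piK_left]
    exact (real_inner_comm _ _).symm
  have h0 : ∀ x : X n, 0 ≤ ⟪A x, x⟫ := by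
    intro x
    rw [hinner]
    apply Finset.sum_nonneg
    intro i _
    rw [inner_piK_self]
    exact real_inner_self_nonneg
  have h1 : ∀ x : X n, ⟪A x, x⟫ ≤ ((r:ℝ)+1) * ⟪x, x⟫ := by
    intro x
    set z := rho n (r+1) x with hz
    have key : ∀ i, π (Dop i x) = π (Dop i z) := by
      intro i
      rw [hz, ← rho_Dop, hπ, piK_rho hK]
    calc ⟪A x, x⟫ = ∑ i, ⟪π (Dop i x), Dop i x⟫ := hinner x x
      _ = ∑ i, ⟪π (Dop i x), π (Dop i x)⟫ := by
          exact Finset.sum_congr rfl fun i _ => inner_piK_self K _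
      _ ≤ ∑ i, ⟪Dop i z, Dop i z⟫ := by
          apply Finset.sum_le_sum
          intro i _
          rw [key i]
          exact inner_piK_le K _
      _ = ∑ i, ⟪U i (Dop i z), z⟫ := by
          exact Finset.sum_congr rfl fun i _ => (adjoint_U_Dop i (Dop i z) z).symm
      _ = ⟪∑ i, U i (Dop i z), z⟫ := (sum_inner _ _ _).symm
      _ = ((r:ℝ)+1) * ⟪z, z⟫ := by
          rw [sum_U_Dop_of_grade (rho_mem_grade (r+1) x), real_inner_smul_left]
      _ ≤ ((r:ℝ)+1) * ⟪x, x⟫ := by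
          apply mul_le_mul_of_nonneg_left (inner_rho_le (r+1) x)
          positivity
  -- trace computation
  have hBπ : ∀ u, (∑ i, Dop i ∘ₗ U i) (π u) = ((n:ℝ) - r) • π u := by
    intro u
    rw [LinearMap.sum_apply]
    exact sum_Dop_U_of_grade (hK (piK_mem K u))
  have htrace : LinearMap.trace ℝ (X n) A = ((n:ℝ) - r) * finrank ℝ K := by
    have step1 : LinearMap.trace ℝ (X n) A
        = ∑ i, LinearMap.trace ℝ (X n) (π ∘ₗ Dop i ∘ₗ U i) := by
      rw [hA, map_sum]
      apply Finset.sum_congr rfl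
      intro i _
      calc LinearMap.trace ℝ (X n) (U i ∘ₗ π ∘ₗ Dop i)
          = LinearMap.trace ℝ (X n) ((π ∘ₗ Dop i) ∘ₗ U i) :=
            (LinearMap.trace_comp_comm' (U i) (π ∘ₗ Dop i)).symm
        _ = LinearMap.trace ℝ (X n) (π ∘ₗ Dop i ∘ₗ U i) := by rw [LinearMap.comp_assoc]
    have step2 : ∑ i, LinearMap.trace ℝ (X n) (π ∘ₗ Dop i ∘ₗ U i)
        = LinearMap.trace ℝ (X n) (π ∘ₗ ∑ i, Dop i ∘ₗ U i) := by
      rw [← map_sum]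
      congr 1
      ext u
      simp [LinearMap.sum_apply]
    have hππ : π ∘ₗ π = π := by
      refine LinearMap.ext fun u => ?_
      exact piK_eq_self (piK_mem K u)
    have step3 : LinearMap.trace ℝ (X n) (π ∘ₗ ∑ i, Dop i ∘ₗ U i)
        = LinearMap.trace ℝ (X n) ((π ∘ₗ ∑ i, Dop i ∘ₗ U i) ∘ₗ π) := by
      conv_lhs => rw [← hππ, LinearMap.comp_assoc]
      exact (LinearMap.trace_comp_comm' π (π ∘ₗ ∑ i, Dop i ∘ₗ U i)).symm
    have step4 : (π ∘ₗ ∑ i, Dop i ∘ₗ U i) ∘ₗ π = ((n:ℝ) - r) • π := by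
      refine LinearMap.ext fun u => ?_
      rw [LinearMap.comp_apply, LinearMap.comp_apply, hBπ u, map_smul, LinearMap.smul_apply]
      rw [piK_eq_self (piK_mem K u)]
    rw [step1, step2, step3, step4, map_smul, smul_eq_mul, hπ, trace_piK]
  -- range of A
  have hrange : LinearMap.range A ≤ ⨆ i, K.map (U i) := by
    rintro y ⟨x, rfl⟩
    rw [hAapply]
    apply Submodule.sum_mem
    intro i _
    apply Submodule.mem_iSup_of_mem i
    exact ⟨π (Dop i x), piK_mem K _, rfl⟩
  have hfr : (finrank ℝ (LinearMap.range A) : ℝ) ≤ (finrank ℝ ↥(⨆ i, K.map (U i)) : ℝ) := by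
    exact_mod_cast Submodule.finrank_mono hrange
  have hmain := trace_le_rank_of_bound A hsym ((r:ℝ)+1) (by positivity) h0 h1
  rw [htrace] at hmain
  calc ((n:ℝ) - r) * finrank ℝ K ≤ ((r:ℝ)+1) * finrank ℝ (LinearMap.range A) := hmain
    _ ≤ ((r:ℝ)+1) * finrank ℝ ↥(⨆ i, K.map (U i)) := by
        apply mul_le_mul_of_nonneg_left hfr
        positivity



open Module

/-- coefficient map to Euclidean space -/
def Phi (n : ℕ) : EA n →ₗ[ℝ] X n where
  toFun x := WithLp.toLp 2 (fun S => lamS S x)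
  map_add' x y := by ext S; simp [PiLp.add_apply]
  map_smul' c x := by ext S; simp [PiLp.smul_apply]

lemma Phi_apply (x : EA n) (S : Finset (Fin n)) : Phi n x S = lamS S x := rfl

lemma Phi_bS (S T : Finset (Fin n)) : Phi n (bS S) T = if T = S then 1 else 0 := by
  rw [Phi_apply, lamS_bS]

lemma Phi_mul_ι {r : ℕ} {x : EA n} (hx : x ∈ monSpan n r) (i : Fin n) :
    Phi n (x * ι ℝ (ev i)) = U i (Phi n x) := by
  induction hx using Submodule.span_induction with
  | mem y hy =>
    obtain ⟨S, hS, rfl⟩ := hy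
    by_cases hiS : i ∈ S
    · rw [bS_mul_ι_of_mem hiS, map_zero]
      ext T
      rw [U_apply]
      by_cases hiT : i ∈ T
      · rw [if_pos hiT, Phi_bS]
        have : ¬ T.erase i = S := fun h => (Finset.notMem_erase i T) (h.symm ▸ hiS)
        rw [if_neg this, mul_zero]
        rfl
      · rw [if_neg hiT]; rfl
    · rw [bS_mul_ι_of_not_mem hiS, map_smul]
      ext T
      rw [PiLp.smul_apply, U_apply, Phi_bS, smul_eq_mul]
      by_cases hT : T = insert i S
      · subst hT
        rw [if_pos rfl, if_pos (Finset.mem_insert_self i S), Finset.erase_insert hiS,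
          Phi_bS, if_pos rfl, mul_one]
      · rw [if_neg hT, mul_zero]
        by_cases hiT : i ∈ T
        · rw [if_pos hiT, Phi_bS]
          have : ¬ T.erase i = S := fun h => hT (by rw [← h, Finset.insert_erase hiT])
          rw [if_neg this, mul_zero]
        · rw [if_neg hiT]
  | zero => rw [zero_mul, map_zero, map_zero]
  | add y z _ _ hy hz => rw [add_mul, map_add, hy, hz, ← map_add, ← map_add]
  | smul c y _ hy => rw [smul_mul_assoc, map_smul, hy, ← map_smul, ← map_smul]

lemma Phi_eq_zero_imp {r : ℕ} {x : EA n} (hx : x ∈ monSpan n r) (h : Phi n x = 0) :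
    x = 0 := by
  classical
  rw [monSpan, Set.image_eq_range] at hx
  rw [Submodule.mem_span_range_iff_exists_fun] at hx
  obtain ⟨c, rfl⟩ := hx
  have hc : ∀ T : {S : Finset (Fin n) // S ∈ {S : Finset (Fin n) | S.card = r}}, c T = 0 := by
    intro T
    have h0 := congrArg (fun v : X n => v T.1) h
    simp only at h0
    rw [Phi_apply, map_sum] at h0
    have : ∀ S : {S : Finset (Fin n) // S ∈ {S : Finset (Fin n) | S.card = r}},
        lamS T.1 (c S • bS S.1) = if S = T then c T else 0 := by
      intro S
      rw [map_smul, lamS_bS, smul_eq_mul]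
      by_cases hST : S = T
      · rw [if_pos hST, if_pos (by rw [hST]), hST, mul_one]
      · rw [if_neg hST, if_neg (fun hh => hST (Subtype.ext hh.symm)), mul_zero]
    rw [Finset.sum_congr rfl (fun S _ => this S), Finset.sum_ite_eq' Finset.univ T
      (fun _ => c T)] at h0
    simpa using h0
  rw [show (c = fun _ => 0) from funext hc]
  simp

lemma Phi_mem_grade {r : ℕ} {x : EA n} (hx : x ∈ monSpan n r) :
    Phi n x ∈ grade n r := by
  induction hx using Submodule.span_induction with
  | mem y hy =>
    obtain ⟨S, hS, rfl⟩ := hy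
    intro T hT
    rw [Phi_bS, if_neg (fun h => hT (by rw [h]; exact hS))]
  | zero => rw [map_zero]; exact Submodule.zero_mem _
  | add y z _ _ hy hz => rw [map_add]; exact Submodule.add_mem _ hy hz
  | smul c y _ hy => rw [map_smul]; exact Submodule.smul_mem _ c hy

lemma finrank_map_Phi {r : ℕ} (W : Submodule ℝ (EA n)) (hW : W ≤ monSpan n r) :
    finrank ℝ ↥(W.map (Phi n)) = finrank ℝ ↥W := by
  haveI : FiniteDimensional ℝ (monSpan n r) :=
    FiniteDimensional.span_of_finite ℝ (Set.toFinite _)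
  haveI : FiniteDimensional ℝ W := Submodule.finiteDimensional_of_le hW
  have hker : LinearMap.ker ((Phi n) ∘ₗ W.subtype) = ⊥ := by
    rw [LinearMap.ker_eq_bot']
    intro m hm
    have : (m : EA n) = 0 := Phi_eq_zero_imp (hW m.2) hm
    exact Subtype.ext this
  have hrange : LinearMap.range ((Phi n) ∘ₗ W.subtype) = W.map (Phi n) := by
    rw [LinearMap.range_comp, Submodule.range_subtype]
  rw [← hrange]
  exact LinearMap.finrank_range_of_inj (LinearMap.ker_eq_bot.mp hker)

lemma mul_power_one_eq_iSup (W : Submodule ℝ (EA n)) :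
    W * ⋀[ℝ]^1 (Fin n → ℝ) = ⨆ i, W.map (LinearMap.mulRight ℝ (ι ℝ (ev i))) := by
  apply le_antisymm
  · apply Submodule.mul_le.mpr
    intro m hm z hz
    rw [exteriorPower, pow_one] at hz
    obtain ⟨v, rfl⟩ := hz
    have hv : ι ℝ v = ∑ i, v i • ι ℝ (ev i) := by
      have := congrArg (ι ℝ (M := Fin n → ℝ)) (ev_sum v).symm
      rw [this, map_sum]
      simp
    rw [hv, Finset.mul_sum]
    apply Submodule.sum_mem
    intro i _
    rw [mul_smul_comm]
    apply Submodule.smul_mem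
    apply Submodule.mem_iSup_of_mem i
    exact ⟨m, hm, rfl⟩
  · apply iSup_le
    intro i
    rintro y ⟨m, hm, rfl⟩
    have hι : ι ℝ (ev i) ∈ ⋀[ℝ]^1 (Fin n → ℝ) := by
      rw [exteriorPower, pow_one]
      exact LinearMap.mem_range_self _ _
    exact Submodule.mul_mem_mul hm hι

lemma map_Phi_mul (W : Submodule ℝ (EA n)) {r : ℕ} (hW : W ≤ monSpan n r) :
    (W * ⋀[ℝ]^1 (Fin n → ℝ)).map (Phi n) = ⨆ i, (W.map (Phi n)).map (U i) := by
  rw [mul_power_one_eq_iSup, Submodule.map_iSup]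
  apply iSup_congr
  intro i
  rw [← Submodule.map_comp, ← Submodule.map_comp]
  apply le_antisymm
  · rintro y ⟨m, hm, rfl⟩
    refine ⟨m, hm, ?_⟩
    rw [LinearMap.comp_apply, LinearMap.comp_apply, ← Phi_mul_ι (hW hm) i]
    rfl
  · rintro y ⟨m, hm, rfl⟩
    refine ⟨m, hm, ?_⟩
    rw [LinearMap.comp_apply, LinearMap.comp_apply, ← Phi_mul_ι (hW hm) i]
    rfl

lemma keyStep (r : ℕ) (W : Submodule ℝ (EA n)) (hW : W ≤ ⋀[ℝ]^r (Fin n → ℝ)) :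
    ((n:ℝ) - r) * finrank ℝ ↥W ≤ ((r:ℝ)+1) * finrank ℝ ↥(W * ⋀[ℝ]^1 (Fin n → ℝ)) := by
  have hWm : W ≤ monSpan n r := le_trans hW (exteriorPower_le_monSpan r)
  have hpow : (⋀[ℝ]^r (Fin n → ℝ)) * ⋀[ℝ]^1 (Fin n → ℝ) = ⋀[ℝ]^(r+1) (Fin n → ℝ) := by
    rw [exteriorPower, exteriorPower, exteriorPower, pow_one, ← pow_succ]
  have hW1 : W * ⋀[ℝ]^1 (Fin n → ℝ) ≤ monSpan n (r+1) := by
    refine le_trans ?_ (exteriorPower_le_monSpan (r+1))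
    rw [← hpow]
    exact mul_le_mul' hW le_rfl
  set K := W.map (Phi n) with hKdef
  have hK : K ≤ grade n r := by
    rintro y ⟨m, hm, rfl⟩
    exact Phi_mem_grade (hWm hm)
  have hcore := core r K hK
  rw [hKdef, finrank_map_Phi W hWm] at hcore
  rw [← hKdef, ← map_Phi_mul W hWm, finrank_map_Phi _ hW1] at hcore
  exact hcore

lemma chain_step (r : ℕ) (hr : r < n) (W : Submodule ℝ (EA n))
    (hW : W ≤ ⋀[ℝ]^r (Fin n → ℝ)) :
    (finrank ℝ ↥W : ℝ) / (n.choose r) ≤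
      (finrank ℝ ↥(W * ⋀[ℝ]^1 (Fin n → ℝ)) : ℝ) / (n.choose (r+1)) := by
  have hCr : (0:ℝ) < (n.choose r : ℝ) := by
    exact_mod_cast Nat.choose_pos hr.le
  have hCr1 : (0:ℝ) < (n.choose (r+1) : ℝ) := by
    exact_mod_cast Nat.choose_pos hr
  set a : ℝ := (finrank ℝ ↥W : ℝ)
  set b : ℝ := (finrank ℝ ↥(W * ⋀[ℝ]^1 (Fin n → ℝ)) : ℝ)
  have hkey : ((n:ℝ) - r) * a ≤ ((r:ℝ)+1) * b := keyStep r W hW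
  have hid : (n.choose (r+1) : ℝ) * ((r:ℝ)+1) = (n.choose r : ℝ) * ((n:ℝ)-r) := by
    have h := Nat.choose_succ_right_eq n r
    have hcast : ((n.choose (r+1) * (r+1) : ℕ) : ℝ) = ((n.choose r * (n - r) : ℕ) : ℝ) :=
      congrArg Nat.cast h
    push_cast [Nat.cast_sub hr.le] at hcast
    linarith [hcast]
  rw [div_le_div_iff₀ hCr hCr1]
  have h3 : (a * (n.choose (r+1) : ℝ)) * ((r:ℝ)+1) ≤ (b * (n.choose r : ℝ)) * ((r:ℝ)+1) := by
    calc (a * (n.choose (r+1) : ℝ)) * ((r:ℝ)+1) = a * ((n.choose (r+1) : ℝ) * ((r:ℝ)+1)) := by ring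
      _ = a * ((n.choose r : ℝ) * ((n:ℝ)-r)) := by rw [hid]
      _ = (((n:ℝ) - r) * a) * (n.choose r : ℝ) := by ring
      _ ≤ (((r:ℝ)+1) * b) * (n.choose r : ℝ) := by
          exact mul_le_mul_of_nonneg_right hkey hCr.le
      _ = (b * (n.choose r : ℝ)) * ((r:ℝ)+1) := by ring
  exact le_of_mul_le_mul_right h3 (by positivity)

lemma main (c : ℕ) : ∀ (r : ℕ) (W : Submodule ℝ (EA n)), W ≤ ⋀[ℝ]^r (Fin n → ℝ) →
    c ≤ n - r →
    (finrank ℝ ↥W : ℝ) / (n.choose r) ≤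
      (finrank ℝ ↥(W * ⋀[ℝ]^c (Fin n → ℝ)) : ℝ) / (n.choose (r+c)) := by
  induction c with
  | zero =>
    intro r W hW hc
    have h0 : W * ⋀[ℝ]^0 (Fin n → ℝ) = W := by
      rw [exteriorPower, pow_zero, Submodule.mul_one]
    rw [h0, Nat.add_zero]
  | succ c ih =>
    intro r W hW hc
    have hrn : r < n := by omega
    set W1 := W * ⋀[ℝ]^1 (Fin n → ℝ) with hW1def
    have hpow : (⋀[ℝ]^r (Fin n → ℝ)) * ⋀[ℝ]^1 (Fin n → ℝ) = ⋀[ℝ]^(r+1) (Fin n → ℝ) := by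
      rw [exteriorPower, exteriorPower, exteriorPower, pow_one, ← pow_succ]
    have hW1 : W1 ≤ ⋀[ℝ]^(r+1) (Fin n → ℝ) := by
      rw [hW1def, ← hpow]
      exact mul_le_mul' hW le_rfl
    have hc' : c ≤ n - (r+1) := by omega
    have hih := ih (r+1) W1 hW1 hc'
    have hassoc : W1 * ⋀[ℝ]^c (Fin n → ℝ) = W * ⋀[ℝ]^(c+1) (Fin n → ℝ) := by
      rw [hW1def, exteriorPower, exteriorPower, exteriorPower, pow_one, mul_assoc,
        ← pow_succ']
    calc (finrank ℝ ↥W : ℝ) / (n.choose r)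
        ≤ (finrank ℝ ↥W1 : ℝ) / (n.choose (r+1)) := chain_step r hrn W hW
      _ ≤ (finrank ℝ ↥(W1 * ⋀[ℝ]^c (Fin n → ℝ)) : ℝ) / (n.choose (r+1+c)) := hih
      _ = (finrank ℝ ↥(W * ⋀[ℝ]^(c+1) (Fin n → ℝ)) : ℝ) / (n.choose (r+(c+1))) := by
          rw [hassoc, show r+1+c = r+(c+1) by omega]


end LocalLYM

/-- Scott and Wilmer's local LYM bound for subspaces of exterior powers. -/
theorem local_LYM_subspaces (n r c : ℕ) (hc : c ≤ n - r)
    (W : Submodule ℝ (ExteriorAlgebra ℝ (Fin n → ℝ)))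
    (hW : W ≤ ⋀[ℝ]^r (Fin n → ℝ)) :
    (Module.finrank ℝ ↥W : ℝ) / (n.choose r) ≤
      (Module.finrank ℝ
          ↥(Submodule.span ℝ
            {x : ExteriorAlgebra ℝ (Fin n → ℝ) |
              ∃ w ∈ W, ∃ z ∈ ⋀[ℝ]^c (Fin n → ℝ), x = w * z}) : ℝ) /
        (n.choose (r + c)) := by
  have hset : Submodule.span ℝ {x : ExteriorAlgebra ℝ (Fin n → ℝ) |
      ∃ w ∈ W, ∃ z ∈ ⋀[ℝ]^c (Fin n → ℝ), x = w * z} = W * ⋀[ℝ]^c (Fin n → ℝ) := by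
    rw [Submodule.mul_eq_span_mul_set]
    congr 1
    ext x
    simp only [Set.mem_mul, Set.mem_setOf_eq, SetLike.mem_coe]
    constructor
    · rintro ⟨w, hw, z, hz, rfl⟩
      exact ⟨w, hw, z, hz, rfl⟩
    · rintro ⟨w, hw, z, hz, rfl⟩
      exact ⟨w, hw, z, hz, rfl⟩
  rw [hset]
  exact LocalLYM.main c r W hW hc
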